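/- The function d_1(T_a,T_b) = ‖M(T_a) − M(T_b)‖₂, where M(T) is the vector of root-to-MRCA path lengths for all tip pairs together with all pendant branch lengths, is a metric on rooted binary trees on k labeled tips with positive branch lengths. -/

import Mathlib

/-- Rooted binary trees with tips labeled by `Fin k`; each internal node
stores the branch lengths of the edges to its two children. -/
inductive RTree (k : ℕ) : Type
  | leaf : Fin k → RTree k
  | node : ℝ → RTree k → ℝ → RTree k → RTree k

namespace RTree

variable {k : ℕ}

/-- The list of tip labels of a tree. -/
def tipList : RTree k → List (Fin k)
  | leaf i => [i]
  | node _ l _ r => l.tipList ++ r.tipList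

/-- The set of tip labels of a tree. -/
def tips (T : RTree k) : Finset (Fin k) := T.tipList.toFinset

/-- `T` is a phylogenetic tree on `k` labeled tips: each label occurs exactly once. -/
def IsPhylo (T : RTree k) : Prop := T.tipList.Nodup ∧ ∀ i : Fin k, i ∈ T.tipList

/-- All branch lengths are positive. -/
def PosLens : RTree k → Prop
  | leaf _ => True
  | node a l b r => 0 < a ∧ 0 < b ∧ PosLens l ∧ PosLens r

/-- All branch lengths are nonnegative. -/
def NonnegLens : RTree k → Prop
  | leaf _ => True
  | node a l b r => 0 ≤ a ∧ 0 ≤ b ∧ NonnegLens l ∧ NonnegLens r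

/-- All branch lengths are at most `ε`. -/
def LensLE (ε : ℝ) : RTree k → Prop
  | leaf _ => True
  | node a l b r => a ≤ ε ∧ b ≤ ε ∧ LensLE ε l ∧ LensLE ε r

/-- All branch lengths are equal to `1`. -/
def UnitLens : RTree k → Prop
  | leaf _ => True
  | node a l b r => a = 1 ∧ b = 1 ∧ UnitLens l ∧ UnitLens r

/-- `m T i j`: the number of edges on the path from the root to the
most recent common ancestor of tips `i` and `j`. -/
def m : RTree k → Fin k → Fin k → ℕ
  | leaf _, _, _ => 0
  | node _ l _ r, i, j =>
      if i ∈ l.tips ∧ j ∈ l.tips then m l i j + 1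
      else if i ∈ r.tips ∧ j ∈ r.tips then m r i j + 1
      else 0

/-- `Mlen T i j`: the sum of branch lengths on the path from the root to the
most recent common ancestor of tips `i` and `j`. -/
def Mlen : RTree k → Fin k → Fin k → ℝ
  | leaf _, _, _ => 0
  | node a l b r, i, j =>
      if i ∈ l.tips ∧ j ∈ l.tips then Mlen l i j + a
      else if i ∈ r.tips ∧ j ∈ r.tips then Mlen r i j + b
      else 0

/-- Whether the tree is a single leaf. -/
def isLeaf : RTree k → Bool
  | leaf _ => true
  | node _ _ _ _ => false

/-- `pend T i`: the length of the pendant edge leading to tip `i`. -/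
def pend : RTree k → Fin k → ℝ
  | leaf _, _ => 0
  | node a l b r, i =>
      if i ∈ l.tips then (if l.isLeaf then a else pend l i)
      else if i ∈ r.tips then (if r.isLeaf then b else pend r i)
      else 0

/-- The set of clades (tip sets of rooted subtrees) of a tree.  Two rooted
trees have the same topology iff they have the same set of clades, i.e. their
internal edges induce the same tip partitions. -/
def clades : RTree k → Set (Finset (Fin k))
  | leaf i => {{i}}
  | node a l b r => insert (node a l b r).tips (clades l ∪ clades r)

/-- Equality of rooted trees: same topology (ignoring the left/right order of
children) and equal corresponding branch lengths. -/
inductive TreeEq : RTree k → RTree k → Prop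
  | leaf (i : Fin k) : TreeEq (.leaf i) (.leaf i)
  | node {l l' r r' : RTree k} (a b : ℝ) :
      TreeEq l l' → TreeEq r r' → TreeEq (.node a l b r) (.node a l' b r')
  | swap {l l' r r' : RTree k} (a b : ℝ) :
      TreeEq l l' → TreeEq r r' → TreeEq (.node a l b r) (.node b r' a l')

/-- `S` is the rooted subtree of `T` hanging at a node at edge-depth `d`. -/
inductive SubtreeAt : RTree k → ℕ → RTree k → Prop
  | refl (T : RTree k) : SubtreeAt T 0 T
  | left {l S : RTree k} {d : ℕ} (a b : ℝ) (r : RTree k) :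
      SubtreeAt l d S → SubtreeAt (.node a l b r) (d + 1) S
  | right {r S : RTree k} {d : ℕ} (a b : ℝ) (l : RTree k) :
      SubtreeAt r d S → SubtreeAt (.node a l b r) (d + 1) S

/-- Relabel the tips of a tree by a permutation. -/
def relabel (σ : Equiv.Perm (Fin k)) : RTree k → RTree k
  | leaf i => leaf (σ i)
  | node a l b r => node a (relabel σ l) b (relabel σ r)

/-- The set of unordered pairs of distinct tips, represented by ordered pairs `(i, j)` with `i < j`. -/
def tipPairs (k : ℕ) : Finset (Fin k × Fin k) :=
  Finset.univ.filter (fun p => p.1 < p.2)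

/-- The `λ`-entry of the tree vector `v_λ(T)` at the pair `(i, j)`:
`(1 − λ) m_{i,j} + λ M_{i,j}`. -/
noncomputable def vPair (lam : ℝ) (T : RTree k) (i j : Fin k) : ℝ :=
  (1 - lam) * (T.m i j : ℝ) + lam * T.Mlen i j

/-- The `λ`-entry of the tree vector `v_λ(T)` at tip `i`: `(1 − λ) · 1 + λ p_i`. -/
noncomputable def vTip (lam : ℝ) (T : RTree k) (i : Fin k) : ℝ :=
  (1 - lam) * 1 + lam * T.pend i

/-- The metric `d_λ(T_a, T_b) = ‖v_λ(T_a) − v_λ(T_b)‖₂`. -/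
noncomputable def treeDist (lam : ℝ) (Ta Tb : RTree k) : ℝ :=
  Real.sqrt
    ((∑ p ∈ tipPairs k, (vPair lam Ta p.1 p.2 - vPair lam Tb p.1 p.2) ^ 2) +
      ∑ i : Fin k, (vTip lam Ta i - vTip lam Tb i) ^ 2)

/-- `‖m(T_a) − m(T_b)‖₂`, the Euclidean distance between the topology vectors
(the final `k` entries of `m` are all `1` and contribute nothing). -/
noncomputable def mDist (Ta Tb : RTree k) : ℝ :=
  Real.sqrt (∑ p ∈ tipPairs k, ((Ta.m p.1 p.2 : ℝ) - (Tb.m p.1 p.2 : ℝ)) ^ 2)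

/-- `‖M(T_a) − M(T_b)‖₂`, the Euclidean distance between the
branch-length vectors (root-to-MRCA path lengths and pendant lengths). -/
noncomputable def MDist (Ta Tb : RTree k) : ℝ :=
  Real.sqrt
    ((∑ p ∈ tipPairs k, (Ta.Mlen p.1 p.2 - Tb.Mlen p.1 p.2) ^ 2) +
      ∑ i : Fin k, (Ta.pend i - Tb.pend i) ^ 2)

/-- `D_λ(T_a,T_b) = (1−λ)‖m(T_a)−m(T_b)‖₂ + λ‖M(T_a)−M(T_b)‖₂`. -/
noncomputable def DDist (lam : ℝ) (Ta Tb : RTree k) : ℝ :=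
  (1 - lam) * mDist Ta Tb + lam * MDist Ta Tb

/-! ### Auxiliary lemmas -/

lemma mem_tips {T : RTree k} {i : Fin k} : i ∈ T.tips ↔ i ∈ T.tipList :=
  List.mem_toFinset

lemma tips_node (a b : ℝ) (l r : RTree k) : (node a l b r).tips = l.tips ∪ r.tips := by
  simp [tips, tipList]

lemma tips_nonempty : ∀ (T : RTree k), T.tips.Nonempty
  | leaf i => ⟨i, by simp [tips, tipList]⟩
  | node a l b r => by
    obtain ⟨x, hx⟩ := tips_nonempty l
    exact ⟨x, by rw [tips_node]; exact Finset.mem_union_left _ hx⟩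

lemma nodup_node {a b : ℝ} {l r : RTree k} (h : (node a l b r).tipList.Nodup) :
    l.tipList.Nodup ∧ r.tipList.Nodup ∧ Disjoint l.tips r.tips := by
  rw [tipList, List.nodup_append] at h
  refine ⟨h.1, h.2.1, ?_⟩
  rw [Finset.disjoint_left]
  intro x hx hx'
  exact h.2.2 x (mem_tips.mp hx) x (mem_tips.mp hx') rfl

lemma mlen_nonneg : ∀ {T : RTree k}, T.PosLens → ∀ i j, 0 ≤ T.Mlen i j
  | leaf _, _, _, _ => le_refl 0
  | node a l b r, ⟨ha, hb, hl, hr⟩, i, j => by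
    rw [Mlen]
    split
    · exact add_nonneg (mlen_nonneg hl i j) ha.le
    split
    · exact add_nonneg (mlen_nonneg hr i j) hb.le
    · exact le_rfl

lemma mlen_comm : ∀ (T : RTree k) (i j : Fin k), T.Mlen i j = T.Mlen j i
  | leaf _, _, _ => rfl
  | node a l b r, i, j => by
    rw [Mlen, Mlen, mlen_comm l i j, mlen_comm r i j]
    by_cases h1 : i ∈ l.tips ∧ j ∈ l.tips
    · rw [if_pos h1, if_pos (⟨h1.2, h1.1⟩ : j ∈ l.tips ∧ i ∈ l.tips)]
    · by_cases h2 : i ∈ r.tips ∧ j ∈ r.tips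
      · rw [if_neg h1, if_pos h2,
          if_neg (show ¬(j ∈ l.tips ∧ i ∈ l.tips) from fun h => h1 ⟨h.2, h.1⟩),
          if_pos (⟨h2.2, h2.1⟩ : j ∈ r.tips ∧ i ∈ r.tips)]
      · rw [if_neg h1, if_neg h2,
          if_neg (show ¬(j ∈ l.tips ∧ i ∈ l.tips) from fun h => h1 ⟨h.2, h.1⟩),
          if_neg (show ¬(j ∈ r.tips ∧ i ∈ r.tips) from fun h => h2 ⟨h.2, h.1⟩)]

lemma mlen_node_left {a b : ℝ} {l r : RTree k} {i j : Fin k}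
    (hi : i ∈ l.tips) (hj : j ∈ l.tips) :
    (node a l b r).Mlen i j = l.Mlen i j + a := by
  rw [Mlen, if_pos ⟨hi, hj⟩]

lemma mlen_node_right {a b : ℝ} {l r : RTree k} {i j : Fin k}
    (hd : Disjoint l.tips r.tips) (hi : i ∈ r.tips) (hj : j ∈ r.tips) :
    (node a l b r).Mlen i j = r.Mlen i j + b := by
  rw [Mlen, if_neg (fun h => Finset.disjoint_left.mp hd h.1 hi), if_pos ⟨hi, hj⟩]

lemma mlen_pos_iff {a b : ℝ} {l r : RTree k} (hpos : (node a l b r).PosLens) (i j : Fin k) :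
    0 < (node a l b r).Mlen i j ↔
      ((i ∈ l.tips ∧ j ∈ l.tips) ∨ (i ∈ r.tips ∧ j ∈ r.tips)) := by
  obtain ⟨ha, hb, pl, pr⟩ := hpos
  constructor
  · intro h
    rw [Mlen] at h
    split_ifs at h with h1 h2
    · exact Or.inl h1
    · exact Or.inr h2
    · exact absurd h (lt_irrefl 0)
  · rintro (⟨hi, hj⟩ | ⟨hi, hj⟩)
    · rw [mlen_node_left hi hj]
      exact add_pos_of_nonneg_of_pos (mlen_nonneg pl i j) ha
    · by_cases h1 : i ∈ l.tips ∧ j ∈ l.tips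
      · rw [mlen_node_left h1.1 h1.2]
        exact add_pos_of_nonneg_of_pos (mlen_nonneg pl i j) ha
      · rw [Mlen, if_neg h1, if_pos ⟨hi, hj⟩]
        exact add_pos_of_nonneg_of_pos (mlen_nonneg pr i j) hb

lemma exists_zero_pair {a b : ℝ} {l r : RTree k}
    (hnd : (node a l b r).tipList.Nodup) :
    ∃ i ∈ (node a l b r).tips, ∃ j ∈ (node a l b r).tips,
      i ≠ j ∧ (node a l b r).Mlen i j = 0 := by
  obtain ⟨_, _, hd⟩ := nodup_node hnd
  obtain ⟨i, hi⟩ := l.tips_nonempty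
  obtain ⟨j, hj⟩ := r.tips_nonempty
  have hjl : j ∉ l.tips := fun h => Finset.disjoint_left.mp hd h hj
  have hir : i ∉ r.tips := Finset.disjoint_left.mp hd hi
  refine ⟨i, by rw [tips_node]; exact Finset.mem_union_left _ hi,
    j, by rw [tips_node]; exact Finset.mem_union_right _ hj, ?_, ?_⟩
  · rintro rfl; exact hir hj
  · rw [Mlen, if_neg (fun h => hjl h.2), if_neg (fun h => hir h.1)]

lemma eq_leaf_of_tips : ∀ {T : RTree k} {i : Fin k},
    T.tipList.Nodup → T.tips = {i} → T = leaf i := by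
  intro T i hnd h
  cases T with
  | leaf j =>
    have hj : j ∈ ({i} : Finset (Fin k)) := h ▸ (by simp [tips, tipList])
    rw [Finset.mem_singleton] at hj
    rw [hj]
  | node a l b r =>
    exfalso
    obtain ⟨_, _, hd⟩ := nodup_node hnd
    obtain ⟨x, hx⟩ := l.tips_nonempty
    obtain ⟨y, hy⟩ := r.tips_nonempty
    have hx' : x = i := by
      have : x ∈ ({i} : Finset (Fin k)) :=
        h ▸ (by rw [tips_node]; exact Finset.mem_union_left _ hx)
      simpa using this
    have hy' : y = i := by
      have : y ∈ ({i} : Finset (Fin k)) :=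
        h ▸ (by rw [tips_node]; exact Finset.mem_union_right _ hy)
      simpa using this
    have hxr : x ∈ r.tips := by rw [hx', ← hy']; exact hy
    exact Finset.disjoint_left.mp hd hx hxr

lemma treeEq_refl : ∀ T : RTree k, TreeEq T T
  | leaf i => TreeEq.leaf i
  | node a l b r => TreeEq.node a b (treeEq_refl l) (treeEq_refl r)

lemma TreeEq.tips_eq {T T' : RTree k} (h : TreeEq T T') : T.tips = T'.tips := by
  induction h with
  | leaf i => rfl
  | node a b h1 h2 ih1 ih2 => rw [tips_node, tips_node, ih1, ih2]
  | swap a b h1 h2 ih1 ih2 => rw [tips_node, tips_node, ih1, ih2, Finset.union_comm]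

lemma TreeEq.isLeaf_eq {T T' : RTree k} (h : TreeEq T T') : T.isLeaf = T'.isLeaf := by
  cases h <;> rfl

lemma TreeEq.mlen_eq {T T' : RTree k} (h : TreeEq T T') :
    T.tipList.Nodup → ∀ i j, T.Mlen i j = T'.Mlen i j := by
  induction h with
  | leaf i => intro _ i j; rfl
  | node a b h1 h2 ih1 ih2 =>
    intro hnd i j
    obtain ⟨nl, nr, _⟩ := nodup_node hnd
    rw [Mlen, Mlen, ← h1.tips_eq, ← h2.tips_eq]
    split_ifs <;> simp [ih1 nl, ih2 nr]
  | swap a b h1 h2 ih1 ih2 =>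
    rename_i l l' r r'
    intro hnd i j
    obtain ⟨nl, nr, hd⟩ := nodup_node hnd
    rw [Mlen, Mlen, ← h1.tips_eq, ← h2.tips_eq]
    by_cases hL : i ∈ l.tips ∧ j ∈ l.tips
    · have hR : ¬(i ∈ r.tips ∧ j ∈ r.tips) :=
        fun hR => Finset.disjoint_left.mp hd hL.1 hR.1
      rw [if_pos hL, if_neg hR, if_pos hL, ih1 nl i j]
    · by_cases hR : i ∈ r.tips ∧ j ∈ r.tips
      · rw [if_neg hL, if_pos hR, if_pos hR, ih2 nr i j]
      · rw [if_neg hL, if_neg hR, if_neg hR, if_neg hL]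

lemma TreeEq.pend_eq {T T' : RTree k} (h : TreeEq T T') :
    T.tipList.Nodup → ∀ i, T.pend i = T'.pend i := by
  induction h with
  | leaf i => intro _ i; rfl
  | node a b h1 h2 ih1 ih2 =>
    rename_i l l' r r'
    intro hnd i
    obtain ⟨nl, nr, _⟩ := nodup_node hnd
    rw [pend, pend, ← h1.tips_eq, ← h2.tips_eq, ← h1.isLeaf_eq, ← h2.isLeaf_eq,
      ← ih1 nl i, ← ih2 nr i]
  | swap a b h1 h2 ih1 ih2 =>
    rename_i l l' r r'
    intro hnd i
    obtain ⟨nl, nr, hd⟩ := nodup_node hnd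
    rw [pend, pend, ← h1.tips_eq, ← h2.tips_eq, ← h1.isLeaf_eq, ← h2.isLeaf_eq,
      ← ih1 nl i, ← ih2 nr i]
    by_cases hL : i ∈ l.tips
    · have hR : i ∉ r.tips := fun hR => Finset.disjoint_left.mp hd hL hR
      rw [if_pos hL, if_neg hR, if_pos hL]
    · by_cases hR : i ∈ r.tips
      · rw [if_neg hL, if_pos hR, if_pos hR]
      · rw [if_neg hL, if_neg hR, if_neg hR, if_neg hL]

lemma sub_edge_eq {c c' : ℝ} {s s' : RTree k} (ns : s.tipList.Nodup)
    (ns' : s'.tipList.Nodup) (hts : s.tips = s'.tips)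
    (ps : s.PosLens) (ps' : s'.PosLens)
    (hMs : ∀ i j, i ∈ s.tips → j ∈ s.tips → i ≠ j → s.Mlen i j + c = s'.Mlen i j + c')
    (hps : ∀ i ∈ s.tips,
      (if s.isLeaf then c else s.pend i) = (if s'.isLeaf then c' else s'.pend i)) :
    c = c' := by
  cases s with
  | leaf i =>
    have hs' : s' = leaf i := eq_leaf_of_tips ns' (by rw [← hts]; simp [tips, tipList])
    subst hs'
    have h := hps i (by simp [tips, tipList])
    simpa [isLeaf] using h
  | node a1 l1 b1 r1 =>
    have hnode' : ∃ a2 l2 b2 r2, s' = node a2 l2 b2 r2 := by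
      cases s' with
      | leaf j =>
        exact absurd (eq_leaf_of_tips (i := j) ns (hts.trans (by simp [tips, tipList])))
          (fun h => by cases h)
      | node a2 l2 b2 r2 => exact ⟨_, _, _, _, rfl⟩
    obtain ⟨a2, l2, b2, r2, rfl⟩ := hnode'
    obtain ⟨i, hi, j, hj, hij, hz⟩ := exists_zero_pair (a := a1) (b := b1) ns
    obtain ⟨i', hi', j', hj', hij', hz'⟩ := exists_zero_pair (a := a2) (b := b2) ns'
    have h1 := hMs i j hi hj hij
    rw [hz, zero_add] at h1
    have h2 := hMs i' j' (hts.symm ▸ hi') (hts.symm ▸ hj') hij'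
    rw [hz', zero_add] at h2
    have n1 := mlen_nonneg ps' i j
    have n2 := mlen_nonneg ps i' j'
    linarith

lemma pend_transfer {c c' : ℝ} {s s' : RTree k} (ns : s.tipList.Nodup)
    (ns' : s'.tipList.Nodup) (hts : s.tips = s'.tips)
    (hps : ∀ i ∈ s.tips,
      (if s.isLeaf then c else s.pend i) = (if s'.isLeaf then c' else s'.pend i)) :
    ∀ i ∈ s.tips, s.pend i = s'.pend i := by
  cases s with
  | leaf i =>
    have hs' : s' = leaf i := eq_leaf_of_tips ns' (by rw [← hts]; simp [tips, tipList])
    subst hs'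
    intro i _; rfl
  | node a1 l1 b1 r1 =>
    cases s' with
    | leaf j =>
      exact absurd (eq_leaf_of_tips (i := j) ns (hts.trans (by simp [tips, tipList])))
        (fun h => by cases h)
    | node a2 l2 b2 r2 =>
      intro i hi
      have h := hps i hi
      simpa [isLeaf] using h

lemma node_case {a b a' b' : ℝ} {l r l' r' : RTree k}
    (hnd : (node a l b r : RTree k).tipList.Nodup)
    (hnd' : (node a' l' b' r' : RTree k).tipList.Nodup)
    (pl : l.PosLens) (pr : r.PosLens) (pl' : l'.PosLens) (pr' : r'.PosLens)
    (hll' : l.tips = l'.tips) (hrr' : r.tips = r'.tips)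
    (hM : ∀ i j, i ∈ (node a l b r).tips → j ∈ (node a l b r).tips → i ≠ j →
      (node a l b r).Mlen i j = (node a' l' b' r').Mlen i j)
    (hp : ∀ i ∈ (node a l b r).tips, (node a l b r).pend i = (node a' l' b' r').pend i) :
    a = a' ∧ b = b' ∧
    (∀ i j, i ∈ l.tips → j ∈ l.tips → i ≠ j → l.Mlen i j = l'.Mlen i j) ∧
    (∀ i ∈ l.tips, l.pend i = l'.pend i) ∧
    (∀ i j, i ∈ r.tips → j ∈ r.tips → i ≠ j → r.Mlen i j = r'.Mlen i j) ∧
    (∀ i ∈ r.tips, r.pend i = r'.pend i) := by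
  obtain ⟨nl, nr, hd⟩ := nodup_node hnd
  obtain ⟨nl', nr', hd'⟩ := nodup_node hnd'
  have memTl : ∀ {i : Fin k}, i ∈ l.tips → i ∈ (node a l b r).tips := fun h => by
    rw [tips_node]; exact Finset.mem_union_left _ h
  have memTr : ∀ {i : Fin k}, i ∈ r.tips → i ∈ (node a l b r).tips := fun h => by
    rw [tips_node]; exact Finset.mem_union_right _ h
  have hMl' : ∀ i j, i ∈ l.tips → j ∈ l.tips → i ≠ j →
      l.Mlen i j + a = l'.Mlen i j + a' := by
    intro i j hi hj hij
    have hi' : i ∈ l'.tips := hll' ▸ hi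
    have hj' : j ∈ l'.tips := hll' ▸ hj
    have h := hM i j (memTl hi) (memTl hj) hij
    rwa [mlen_node_left hi hj, mlen_node_left hi' hj'] at h
  have hpl2 : ∀ i ∈ l.tips,
      (if l.isLeaf then a else l.pend i) = (if l'.isLeaf then a' else l'.pend i) := by
    intro i hi
    have hi' : i ∈ l'.tips := hll' ▸ hi
    have h := hp i (memTl hi)
    rw [pend, if_pos hi] at h
    rwa [pend, if_pos hi'] at h
  have hMr' : ∀ i j, i ∈ r.tips → j ∈ r.tips → i ≠ j →
      r.Mlen i j + b = r'.Mlen i j + b' := by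
    intro i j hi hj hij
    have hi' : i ∈ r'.tips := hrr' ▸ hi
    have hj' : j ∈ r'.tips := hrr' ▸ hj
    have h := hM i j (memTr hi) (memTr hj) hij
    rwa [mlen_node_right hd hi hj, mlen_node_right hd' hi' hj'] at h
  have hpr2 : ∀ i ∈ r.tips,
      (if r.isLeaf then b else r.pend i) = (if r'.isLeaf then b' else r'.pend i) := by
    intro i hi
    have hi' : i ∈ r'.tips := hrr' ▸ hi
    have h := hp i (memTr hi)
    have hnl2 : i ∉ l.tips := fun hx => Finset.disjoint_left.mp hd hx hi
    have hnl2' : i ∉ l'.tips := fun hx => Finset.disjoint_left.mp hd' hx hi'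
    rw [pend, if_neg hnl2, if_pos hi] at h
    rwa [pend, if_neg hnl2', if_pos hi'] at h
  have ha2 := sub_edge_eq nl nl' hll' pl pl' hMl' hpl2
  have hb2 := sub_edge_eq nr nr' hrr' pr pr' hMr' hpr2
  refine ⟨ha2, hb2, ?_, pend_transfer nl nl' hll' hpl2, ?_, pend_transfer nr nr' hrr' hpr2⟩
  · intro i j hi hj hij
    have h := hMl' i j hi hj hij
    rw [ha2] at h
    exact add_right_cancel h
  · intro i j hi hj hij
    have h := hMr' i j hi hj hij
    rw [hb2] at h
    exact add_right_cancel h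

lemma blocks_eq {i0 : Fin k} {A B A' B' : Finset (Fin k)}
    (hdAB : Disjoint A B) (hdAB' : Disjoint A' B') (hU : A ∪ B = A' ∪ B')
    (hi0 : i0 ∈ A) (hi0' : i0 ∈ A')
    (hsame : ∀ i j, i ∈ A ∪ B → j ∈ A ∪ B → i ≠ j →
      ((i ∈ A ∧ j ∈ A) ∨ (i ∈ B ∧ j ∈ B) ↔ (i ∈ A' ∧ j ∈ A') ∨ (i ∈ B' ∧ j ∈ B'))) :
    A = A' ∧ B = B' := by
  have hA : A = A' := by
    ext j
    constructor
    · intro hj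
      by_cases hji : j = i0
      · subst hji; exact hi0'
      · have hm := (hsame i0 j (Finset.mem_union_left _ hi0)
          (Finset.mem_union_left _ hj) (fun h => hji h.symm)).mp (Or.inl ⟨hi0, hj⟩)
        rcases hm with ⟨_, h⟩ | ⟨h0, _⟩
        · exact h
        · exact absurd h0 (Finset.disjoint_left.mp hdAB' hi0')
    · intro hj
      by_cases hji : j = i0
      · subst hji; exact hi0
      · have hjU : j ∈ A ∪ B := hU.symm ▸ Finset.mem_union_left _ hj
        have hm := (hsame i0 j (Finset.mem_union_left _ hi0) hjU
          (fun h => hji h.symm)).mpr (Or.inl ⟨hi0', hj⟩)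
        rcases hm with ⟨_, h⟩ | ⟨h0, _⟩
        · exact h
        · exact absurd h0 (Finset.disjoint_left.mp hdAB hi0)
  refine ⟨hA, ?_⟩
  rw [← Finset.union_sdiff_cancel_left hdAB, ← Finset.union_sdiff_cancel_left hdAB',
    hU, hA]

lemma reconstruct (T : RTree k) : ∀ (T' : RTree k), T.tipList.Nodup → T'.tipList.Nodup →
    T.tips = T'.tips → T.PosLens → T'.PosLens →
    (∀ i j, i ∈ T.tips → j ∈ T.tips → i ≠ j → T.Mlen i j = T'.Mlen i j) →
    (∀ i ∈ T.tips, T.pend i = T'.pend i) → TreeEq T T' := by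
  induction T with
  | leaf i =>
    intro T' _ hnd' htips _ _ _ _
    have hT' : T' = leaf i := eq_leaf_of_tips hnd' (by rw [← htips]; simp [tips, tipList])
    subst hT'
    exact TreeEq.leaf i
  | node a l b r ihl ihr =>
    intro T' hnd hnd' htips hpos hpos' hM hp
    obtain ⟨nl, nr, hd⟩ := nodup_node hnd
    obtain ⟨ha, hb, pl, pr⟩ := id hpos
    cases T' with
    | leaf j =>
      exact absurd (eq_leaf_of_tips (i := j) hnd (htips.trans (by simp [tips, tipList])))
        (fun h => by cases h)
    | node a' l' b' r' =>
      obtain ⟨nl', nr', hd'⟩ := nodup_node hnd'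
      obtain ⟨ha', hb', pl', pr'⟩ := id hpos'
      have htips2 : l.tips ∪ r.tips = l'.tips ∪ r'.tips := by
        rw [← tips_node a b, ← tips_node a' b']; exact htips
      have hMTiff : ∀ i j, i ∈ l.tips ∪ r.tips → j ∈ l.tips ∪ r.tips → i ≠ j →
          ((i ∈ l.tips ∧ j ∈ l.tips) ∨ (i ∈ r.tips ∧ j ∈ r.tips) ↔
           (i ∈ l'.tips ∧ j ∈ l'.tips) ∨ (i ∈ r'.tips ∧ j ∈ r'.tips)) := by
        intro i j hi hj hij
        rw [← mlen_pos_iff hpos i j, ← mlen_pos_iff hpos' i j,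
          hM i j (by rw [tips_node]; exact hi) (by rw [tips_node]; exact hj) hij]
      obtain ⟨i0, hi0⟩ := l.tips_nonempty
      have hi0U : i0 ∈ l'.tips ∪ r'.tips := htips2 ▸ Finset.mem_union_left _ hi0
      rcases Finset.mem_union.mp hi0U with hi0' | hi0'
      · obtain ⟨hll', hrr'⟩ := blocks_eq hd hd' htips2 hi0 hi0' hMTiff
        obtain ⟨ha2, hb2, hMl, hpl, hMr, hpr⟩ :=
          node_case hnd hnd' pl pr pl' pr' hll' hrr' hM hp
        rw [← ha2, ← hb2]
        exact TreeEq.node a b (ihl l' nl nl' hll' pl pl' hMl hpl)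
          (ihr r' nr nr' hrr' pr pr' hMr hpr)
      · have htips2' : l.tips ∪ r.tips = r'.tips ∪ l'.tips := by
          rw [htips2, Finset.union_comm]
        have hMTiff' : ∀ i j, i ∈ l.tips ∪ r.tips → j ∈ l.tips ∪ r.tips → i ≠ j →
            ((i ∈ l.tips ∧ j ∈ l.tips) ∨ (i ∈ r.tips ∧ j ∈ r.tips) ↔
             (i ∈ r'.tips ∧ j ∈ r'.tips) ∨ (i ∈ l'.tips ∧ j ∈ l'.tips)) := by
          intro i j hi hj hij
          rw [hMTiff i j hi hj hij, or_comm]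
        obtain ⟨hlr', hrl'⟩ := blocks_eq hd hd'.symm htips2' hi0 hi0' hMTiff'
        have hsw : TreeEq (node a' l' b' r') (node b' r' a' l') :=
          TreeEq.swap a' b' (treeEq_refl l') (treeEq_refl r')
        have hnd'' : (node b' r' a' l' : RTree k).tipList.Nodup := by
          rw [tipList, List.nodup_append] at hnd' ⊢
          exact ⟨hnd'.2.1, hnd'.1, fun x h1 y h2 => (hnd'.2.2 y h2 x h1).symm⟩
        have hM'' : ∀ i j, i ∈ (node a l b r).tips → j ∈ (node a l b r).tips → i ≠ j →
            (node a l b r).Mlen i j = (node b' r' a' l').Mlen i j := by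
          intro i j hi hj hij
          exact (hM i j hi hj hij).trans (hsw.mlen_eq hnd' i j)
        have hp'' : ∀ i ∈ (node a l b r).tips,
            (node a l b r).pend i = (node b' r' a' l').pend i := by
          intro i hi
          exact (hp i hi).trans (hsw.pend_eq hnd' i)
        obtain ⟨hab', hba', hMl, hpl, hMr, hpr⟩ :=
          node_case hnd hnd'' pl pr pr' pl' hlr' hrl' hM'' hp''
        rw [← hba', ← hab']
        exact TreeEq.swap a b (ihl r' nl nr' hlr' pl pr' hMl hpl)
          (ihr l' nr nl' hrl' pr pl' hMr hpr)

noncomputable def Mvec (T : RTree k) :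
    EuclideanSpace ℝ ({p : Fin k × Fin k // p ∈ tipPairs k} ⊕ Fin k) :=
  WithLp.toLp 2 (fun x => Sum.elim (fun (p : {p : Fin k × Fin k // p ∈ tipPairs k}) => T.Mlen p.1.1 p.1.2) (fun i => T.pend i) x)

lemma MDist_eq_dist (Ta Tb : RTree k) : MDist Ta Tb = dist (Mvec Ta) (Mvec Tb) := by
  rw [MDist, EuclideanSpace.dist_eq]
  congr 1
  rw [Fintype.sum_sum_type]
  congr 1
  · rw [← Finset.sum_coe_sort (tipPairs k)
      (fun p => (Ta.Mlen p.1 p.2 - Tb.Mlen p.1 p.2) ^ 2)]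
    exact Finset.sum_congr rfl fun p _ => by
      simp [Mvec, Real.dist_eq, sq_abs]
  · exact Finset.sum_congr rfl fun i _ => by
      simp [Mvec, Real.dist_eq, sq_abs]

end RTree
open RTree in
/-- `d₁(T_a,T_b) = ‖M(T_a) − M(T_b)‖₂` is a metric on rooted
binary trees on `k` labeled tips with positive branch lengths. -/
theorem MDist_is_metric {k : ℕ} :
    (∀ Ta Tb : RTree k, Ta.IsPhylo → Tb.IsPhylo → Ta.PosLens → Tb.PosLens →
      0 ≤ MDist Ta Tb) ∧
    (∀ Ta Tb : RTree k, Ta.IsPhylo → Tb.IsPhylo → Ta.PosLens → Tb.PosLens →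
      (MDist Ta Tb = 0 ↔ TreeEq Ta Tb)) ∧
    (∀ Ta Tb : RTree k, Ta.IsPhylo → Tb.IsPhylo → Ta.PosLens → Tb.PosLens →
      MDist Ta Tb = MDist Tb Ta) ∧
    (∀ Ta Tb Tc : RTree k, Ta.IsPhylo → Tb.IsPhylo → Tc.IsPhylo →
      Ta.PosLens → Tb.PosLens → Tc.PosLens →
      MDist Ta Tb ≤ MDist Ta Tc + MDist Tc Tb) := by
  refine ⟨?_, ?_, ?_, ?_⟩
  · intro Ta Tb _ _ _ _
    exact Real.sqrt_nonneg _
  · intro Ta Tb hpa hpb hla hlb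
    constructor
    · intro h0
      rw [MDist_eq_dist] at h0
      have hv : Mvec Ta = Mvec Tb := by rwa [dist_eq_zero] at h0
      have hMeq : ∀ i j : Fin k, i ≠ j → Ta.Mlen i j = Tb.Mlen i j := by
        intro i j hij
        rcases lt_or_gt_of_ne hij with h | h
        · have := congrFun (congrArg WithLp.ofLp hv) (Sum.inl ⟨(i, j), by simp [tipPairs, h]⟩)
          simpa [Mvec] using this
        · have := congrFun (congrArg WithLp.ofLp hv) (Sum.inl ⟨(j, i), by simp [tipPairs, h]⟩)
          rw [mlen_comm Ta i j, mlen_comm Tb i j]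
          simpa [Mvec] using this
      have hpeq : ∀ i, Ta.pend i = Tb.pend i := by
        intro i
        have := congrFun (congrArg WithLp.ofLp hv) (Sum.inr i)
        simpa [Mvec] using this
      have htips : Ta.tips = Tb.tips := by
        have h1 : Ta.tips = Finset.univ :=
          Finset.eq_univ_of_forall fun i => List.mem_toFinset.mpr (hpa.2 i)
        have h2 : Tb.tips = Finset.univ :=
          Finset.eq_univ_of_forall fun i => List.mem_toFinset.mpr (hpb.2 i)
        rw [h1, h2]
      exact reconstruct Ta Tb hpa.1 hpb.1 htips hla hlb
        (fun i j _ _ hij => hMeq i j hij) (fun i _ => hpeq i)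
    · intro hTeq
      have hM := hTeq.mlen_eq hpa.1
      have hp := hTeq.pend_eq hpa.1
      rw [MDist]
      have hz : (∑ p ∈ tipPairs k, (Ta.Mlen p.1 p.2 - Tb.Mlen p.1 p.2) ^ 2) +
          ∑ i : Fin k, (Ta.pend i - Tb.pend i) ^ 2 = 0 := by
        rw [Finset.sum_eq_zero fun p _ => by rw [hM p.1 p.2]; ring,
          Finset.sum_eq_zero fun i _ => by rw [hp i]; ring, add_zero]
      rw [hz, Real.sqrt_zero]
  · intro Ta Tb _ _ _ _
    rw [MDist_eq_dist, MDist_eq_dist, dist_comm]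
  · intro Ta Tb Tc _ _ _ _ _ _
    rw [MDist_eq_dist, MDist_eq_dist, MDist_eq_dist]
    exact dist_triangle _ _ _
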